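/- Define λ(H,G) to be the topology on H in which U is open iff for all h₁,h₂ ∈ H the sets h₁Uh₂ and h₁U⁻¹h₂ are open in τ(H,G). Then with H equipped with λ(H,G): the action of G on H is separately continuous, inversion on H is continuous, and multiplication on H is separately continuous; moreover λ(H,G) is the finest topology on H with these three properties. -/

import Mathlib

open TopologicalSpace Topology

section LambdaAux

variable {G H : Type*} [Group G] [TopologicalSpace G] [IsTopologicalGroup G]
  [Group H] [MulDistribMulAction G H]

/-- The topology `τ(H,G)` generated by the sets `U • h`. -/
def tauT (G H : Type*) [TopologicalSpace G] [SMul G H] : TopologicalSpace H :=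
  generateFrom {s : Set H | ∃ (U : Set G) (h : H), IsOpen U ∧ s = (· • h) '' U}

lemma isOpen_tau_basic {V : Set G} (hV : IsOpen V) (h : H) :
    IsOpen[tauT G H] ((· • h) '' V) :=
  isOpen_generateFrom_of_mem ⟨V, h, hV, rfl⟩

/-- Each `g • ·` is `τ`-continuous. -/
lemma continuous_smul_tau (g : G) :
    Continuous[tauT G H, tauT G H] (fun h : H => g • h) := by
  rw [tauT, continuous_generateFrom_iff]
  rintro s ⟨V, h, hV, rfl⟩
  have e : (fun x : H => g • x) ⁻¹' ((· • h) '' V) = (· • h) '' ((g * ·) ⁻¹' V) := by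
    ext x
    simp only [Set.mem_preimage, Set.mem_image]
    constructor
    · rintro ⟨v, hv, hx⟩
      refine ⟨g⁻¹ * v, by simpa using hv, ?_⟩
      rw [mul_smul, hx, inv_smul_smul]
    · rintro ⟨w, hw, rfl⟩
      exact ⟨g * w, hw, mul_smul g w h⟩
  rw [e]
  exact isOpen_tau_basic (hV.preimage (continuous_mul_left g)) h

lemma isOpen_smul_image_tau {S : Set H} (g : G) (hS : IsOpen[tauT G H] S) :
    IsOpen[tauT G H] ((fun h : H => g • h) '' S) := by
  have e : (fun h : H => g • h) '' S = (fun h : H => g⁻¹ • h) ⁻¹' S := by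
    ext x
    simp only [Set.mem_preimage, Set.mem_image]
    constructor
    · rintro ⟨s, hs, rfl⟩; simpa [inv_smul_smul] using hs
    · intro hx; exact ⟨g⁻¹ • x, hx, smul_inv_smul g x⟩
  rw [e]
  exact continuous_def.mp (continuous_smul_tau g⁻¹) S hS

/-- Each orbit map `g ↦ g • h` is continuous from `G` to `(H, τ)`. -/
lemma continuous_orbit_tau (h : H) :
    Continuous[_, tauT G H] (fun g : G => g • h) := by
  rw [tauT, continuous_generateFrom_iff]
  rintro s ⟨V, k, hV, rfl⟩
  rw [isOpen_iff_forall_mem_open]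
  rintro g₀ hg₀
  obtain ⟨v, hv, hvk⟩ := hg₀
  refine ⟨(fun x => x * (v⁻¹ * g₀)) '' V, ?_, ?_, ⟨v, hv, mul_inv_cancel_left v g₀⟩⟩
  · rintro x ⟨v', hv', rfl⟩
    refine ⟨v', hv', ?_⟩
    have hvk' : v • k = g₀ • h := hvk
    show v' • k = (v' * (v⁻¹ * g₀)) • h
    rw [mul_smul, mul_smul, ← hvk', inv_smul_smul]
  · exact (Homeomorph.mulRight (v⁻¹ * g₀)).isOpenMap V hV

/-- Preimage of left translation as an image. -/
lemma preimage_mul_left (h : H) (U : Set H) :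
    (fun x => h * x) ⁻¹' U = (fun x => h⁻¹ * x) '' U := by
  ext x
  simp only [Set.mem_preimage, Set.mem_image]
  constructor
  · intro hx; exact ⟨h * x, hx, inv_mul_cancel_left h x⟩
  · rintro ⟨u, hu, rfl⟩; simpa [mul_inv_cancel_left] using hu

lemma preimage_mul_right (h : H) (U : Set H) :
    (fun x => x * h) ⁻¹' U = (fun x => x * h⁻¹) '' U := by
  ext x
  simp only [Set.mem_preimage, Set.mem_image]
  constructor
  · intro hx; exact ⟨x * h, hx, mul_inv_cancel_right x h⟩
  · rintro ⟨u, hu, rfl⟩; simpa [inv_mul_cancel_right] using hu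

lemma preimage_inv' (U : Set H) :
    (fun x : H => x⁻¹) ⁻¹' U = (fun x : H => x⁻¹) '' U := by
  ext x
  simp only [Set.mem_preimage, Set.mem_image]
  constructor
  · intro hx; exact ⟨x⁻¹, hx, inv_inv x⟩
  · rintro ⟨u, hu, rfl⟩; simpa using hu

lemma preimage_smul' (g : G) (U : Set H) :
    (fun x : H => g • x) ⁻¹' U = (fun x : H => g⁻¹ • x) '' U := by
  ext x
  simp only [Set.mem_preimage, Set.mem_image]
  constructor
  · intro hx; exact ⟨g • x, hx, inv_smul_smul g x⟩
  · rintro ⟨u, hu, rfl⟩; simpa [smul_inv_smul] using hu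

/-- The topology `λ(H,G)`. -/
def lamT (G H : Type*) [Group G] [TopologicalSpace G] [Group H]
    [MulDistribMulAction G H] : TopologicalSpace H where
  IsOpen U := ∀ h₁ h₂ : H,
    IsOpen[tauT G H] ((fun u => h₁ * u * h₂) '' U) ∧
    IsOpen[tauT G H] ((fun u => h₁ * u⁻¹ * h₂) '' U)
  isOpen_univ h₁ h₂ := by
    constructor
    · have : (fun u : H => h₁ * u * h₂) '' Set.univ = Set.univ := by
        rw [Set.image_univ, Set.range_eq_univ]
        intro y; exact ⟨h₁⁻¹ * y * h₂⁻¹, by group⟩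
      rw [this]; exact (tauT G H).isOpen_univ
    · have : (fun u : H => h₁ * u⁻¹ * h₂) '' Set.univ = Set.univ := by
        rw [Set.image_univ, Set.range_eq_univ]
        intro y; exact ⟨(h₁⁻¹ * y * h₂⁻¹)⁻¹, by group⟩
      rw [this]; exact (tauT G H).isOpen_univ
  isOpen_inter := by
    intro s t hs ht h₁ h₂
    have hinj : Function.Injective (fun u : H => h₁ * u * h₂) := by
      intro a b hab
      exact mul_left_cancel (mul_right_cancel hab)
    have hinj' : Function.Injective (fun u : H => h₁ * u⁻¹ * h₂) := by
      intro a b hab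
      exact inv_injective (mul_left_cancel (mul_right_cancel hab))
    letI : TopologicalSpace H := tauT G H
    constructor
    · rw [Set.image_inter hinj]
      exact (hs h₁ h₂).1.inter (ht h₁ h₂).1
    · rw [Set.image_inter hinj']
      exact (hs h₁ h₂).2.inter (ht h₁ h₂).2
  isOpen_sUnion := by
    intro S hS h₁ h₂
    constructor
    · rw [Set.image_sUnion]
      refine @isOpen_sUnion H (tauT G H) _ ?_
      rintro s ⟨u, hu, rfl⟩
      exact (hS u hu h₁ h₂).1
    · rw [Set.image_sUnion]
      refine @isOpen_sUnion H (tauT G H) _ ?_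
      rintro s ⟨u, hu, rfl⟩
      exact (hS u hu h₁ h₂).2

lemma lam_isOpen_iff {U : Set H} :
    IsOpen[lamT G H] U ↔ ∀ h₁ h₂ : H,
      IsOpen[tauT G H] ((fun u => h₁ * u * h₂) '' U) ∧
      IsOpen[tauT G H] ((fun u => h₁ * u⁻¹ * h₂) '' U) := Iff.rfl

end LambdaAux

/-- The topology `λ(H,G)` (whose open sets are those `U` with all translates `h₁Uh₂` and
`h₁U⁻¹h₂` open in `τ(H,G)`) makes the action of `G` separately continuous, the inversion
continuous and the multiplication separately continuous, and it is the finest topology on `H`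
with these properties. -/
theorem lambda_topology_properties {G H : Type*} [Group G] [TopologicalSpace G]
    [IsTopologicalGroup G] [Group H] [MulDistribMulAction G H] :
    letI τ : TopologicalSpace H :=
      generateFrom {s : Set H | ∃ (U : Set G) (h : H), IsOpen U ∧ s = (· • h) '' U}
    ∃ lam : TopologicalSpace H,
      (∀ U : Set H, IsOpen[lam] U ↔ ∀ h₁ h₂ : H,
          IsOpen[τ] ((fun u => h₁ * u * h₂) '' U) ∧
          IsOpen[τ] ((fun u => h₁ * u⁻¹ * h₂) '' U)) ∧
      (∀ g : G, @Continuous H H lam lam (fun h => g • h)) ∧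
      (∀ h : H, @Continuous G H _ lam (fun g : G => g • h)) ∧
      (@Continuous H H lam lam fun h => h⁻¹) ∧
      (∀ h : H, @Continuous H H lam lam fun x => h * x) ∧
      (∀ h : H, @Continuous H H lam lam fun x => x * h) ∧
      ∀ t : TopologicalSpace H,
        ((∀ g : G, @Continuous H H t t (fun h => g • h)) ∧
          (∀ h : H, @Continuous G H _ t (fun g : G => g • h)) ∧
          (@Continuous H H t t fun h => h⁻¹) ∧
          (∀ h : H, @Continuous H H t t fun x => h * x) ∧
          (∀ h : H, @Continuous H H t t fun x => x * h)) →
        lam ≤ t := by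
  refine ⟨lamT G H, fun U => Iff.rfl, ?_, ?_, ?_, ?_, ?_, ?_⟩
  · -- g • · continuous in lam
    intro g
    rw [continuous_def]
    intro U hU
    rw [lam_isOpen_iff] at hU ⊢
    intro a b
    rw [preimage_smul' g U]
    constructor
    · rw [Set.image_image]
      have e : (fun x : H => a * g⁻¹ • x * b) =
          (fun x : H => g⁻¹ • x) ∘ (fun u : H => (g • a) * u * (g • b)) := by
        funext u
        simp [Function.comp, smul_mul', inv_smul_smul]
      rw [e, Set.image_comp]
      exact isOpen_smul_image_tau g⁻¹ ((hU (g • a) (g • b)).1)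
    · rw [Set.image_image]
      have e : (fun x : H => a * (g⁻¹ • x)⁻¹ * b) =
          (fun x : H => g⁻¹ • x) ∘ (fun u : H => (g • a) * u⁻¹ * (g • b)) := by
        funext u
        simp [Function.comp, smul_mul', smul_inv', inv_smul_smul]
      rw [e, Set.image_comp]
      exact isOpen_smul_image_tau g⁻¹ ((hU (g • a) (g • b)).2)
  · -- orbit maps continuous
    intro h
    rw [continuous_def]
    intro U hU
    rw [lam_isOpen_iff] at hU
    have hUτ : IsOpen[tauT G H] U := by
      have := (hU 1 1).1
      simpa using this
    exact continuous_def.mp (continuous_orbit_tau h) U hUτ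
  · -- inversion continuous in lam
    rw [continuous_def]
    intro U hU
    rw [lam_isOpen_iff] at hU ⊢
    intro a b
    rw [preimage_inv' U]
    constructor
    · rw [Set.image_image]
      exact (hU a b).2
    · rw [Set.image_image]
      have e : (fun x : H => a * x⁻¹⁻¹ * b) = fun x : H => a * x * b := by
        funext x; rw [inv_inv]
      rw [e]
      exact (hU a b).1
  · -- left translations continuous in lam
    intro h
    rw [continuous_def]
    intro U hU
    rw [lam_isOpen_iff] at hU ⊢
    intro a b
    rw [preimage_mul_left h U]
    constructor
    · rw [Set.image_image]
      have e : (fun x : H => a * (h⁻¹ * x) * b) = fun x : H => (a * h⁻¹) * x * b := by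
        funext x; group
      rw [e]
      exact (hU (a * h⁻¹) b).1
    · rw [Set.image_image]
      have e : (fun x : H => a * (h⁻¹ * x)⁻¹ * b) = fun x : H => a * x⁻¹ * (h * b) := by
        funext x; group
      rw [e]
      exact (hU a (h * b)).2
  · -- right translations continuous in lam
    intro h
    rw [continuous_def]
    intro U hU
    rw [lam_isOpen_iff] at hU ⊢
    intro a b
    rw [preimage_mul_right h U]
    constructor
    · rw [Set.image_image]
      have e : (fun x : H => a * (x * h⁻¹) * b) = fun x : H => a * x * (h⁻¹ * b) := by
        funext x; group
      rw [e]
      exact (hU a (h⁻¹ * b)).1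
    · rw [Set.image_image]
      have e : (fun x : H => a * (x * h⁻¹)⁻¹ * b) = fun x : H => (a * h) * x⁻¹ * b := by
        funext x; group
      rw [e]
      exact (hU (a * h) b).2
  · -- finest
    rintro t ⟨-, horb, hinv, hleft, hright⟩
    intro U hU
    -- hU : IsOpen[t] U ; goal : IsOpen[lamT G H] U
    have t_to_tau : ∀ {V : Set H}, IsOpen[t] V → IsOpen[tauT G H] V := by
      intro V hV
      rw [@isOpen_iff_forall_mem_open H (tauT G H) V]
      intro x hx
      refine ⟨(· • x) '' ((fun g : G => g • x) ⁻¹' V), ?_, ?_, ⟨1, by simpa using hx, one_smul G x⟩⟩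
      · rintro y ⟨g, hg, rfl⟩
        exact hg
      · exact isOpen_tau_basic (continuous_def.mp (horb x) V hV) x
    rw [lam_isOpen_iff]
    intro a b
    constructor
    · refine t_to_tau ?_
      have e : (fun u : H => a * u * b) '' U = (fun x : H => a⁻¹ * x * b⁻¹) ⁻¹' U := by
        ext x
        simp only [Set.mem_image, Set.mem_preimage]
        constructor
        · rintro ⟨u, hu, rfl⟩; simpa [mul_assoc, inv_mul_cancel_left, mul_inv_cancel_right]
            using hu
        · intro hx; exact ⟨a⁻¹ * x * b⁻¹, hx, by group⟩
      rw [e]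
      have hc : @Continuous H H t t (fun x : H => a⁻¹ * x * b⁻¹) := by
        have : (fun x : H => a⁻¹ * x * b⁻¹) = (fun y : H => y * b⁻¹) ∘ (fun x : H => a⁻¹ * x) :=
          rfl
        rw [this]
        exact (hright b⁻¹).comp (hleft a⁻¹)
      exact continuous_def.mp hc U hU
    · refine t_to_tau ?_
      have e : (fun u : H => a * u⁻¹ * b) '' U = (fun x : H => (a⁻¹ * x * b⁻¹)⁻¹) ⁻¹' U := by
        ext x
        simp only [Set.mem_image, Set.mem_preimage]
        constructor
        · rintro ⟨u, hu, rfl⟩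
          have : (a⁻¹ * (a * u⁻¹ * b) * b⁻¹)⁻¹ = u := by group
          rwa [this]
        · intro hx
          exact ⟨(a⁻¹ * x * b⁻¹)⁻¹, hx, by group⟩
      rw [e]
      have hc : @Continuous H H t t (fun x : H => (a⁻¹ * x * b⁻¹)⁻¹) := by
        have : (fun x : H => (a⁻¹ * x * b⁻¹)⁻¹) =
            (fun y : H => y⁻¹) ∘ (fun y : H => y * b⁻¹) ∘ (fun x : H => a⁻¹ * x) := rfl
        rw [this]
        exact hinv.comp ((hright b⁻¹).comp (hleft a⁻¹))
      exact continuous_def.mp hc U hU
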